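/- Let θᵢ = θ(χᵢ, aᵢ, bᵢ, cᵢ) (i = 1, 2) be automorphisms of D₁ of the form θ(L(x)) = χ(x)L(x) + (b∂(x)+a)χ(x)I(x), θ(I(y)) = cχ(y)I(y). Then their composition satisfies θ₁ ∘ θ₂ = θ(χ₁χ₂, a₁ + c₁a₂, b₁ + c₁b₂, c₁c₂). -/
import Mathlib


/-- Composition law for automorphisms of `D₁` of the form
`θ(χ,a,b,c) : L x ↦ χ(x)L(x) + (b∂(x)+a)χ(x)I(x), I y ↦ cχ(y)I(y)`:
`θ(χ₁,a₁,b₁,c₁) ∘ θ(χ₂,a₂,b₂,c₂) = θ(χ₁χ₂, a₁+c₁a₂, b₁+c₁b₂, c₁c₂)`. -/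
theorem stmt_16 {F : Type*} [Field F] [CharZero F]
    {A : Type*} [AddCommGroup A]
    (d : A →+ F) (hd : ∀ x : A, d x = 0 → x = 0)
    {D : Type*} [LieRing D] [LieAlgebra F D]
    (L I : A → D)
    (hLL : ∀ x y : A, ⁅L x, L y⁆ = d (y - x) • L (x + y))
    (hLI : ∀ x y : A, ⁅L x, I y⁆ = d y • I (x + y))
    (hII : ∀ x y : A, ⁅I x, I y⁆ = 0)
    (χ₁ χ₂ : A → F)
    (hχ₁0 : χ₁ 0 = 1) (hχ₁ : ∀ x y : A, χ₁ (x + y) = χ₁ x * χ₁ y) (hχ₁ne : ∀ x, χ₁ x ≠ 0)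
    (hχ₂0 : χ₂ 0 = 1) (hχ₂ : ∀ x y : A, χ₂ (x + y) = χ₂ x * χ₂ y) (hχ₂ne : ∀ x, χ₂ x ≠ 0)
    (a₁ a₂ b₁ b₂ c₁ c₂ : F) (hc₁ : c₁ ≠ 0) (hc₂ : c₂ ≠ 0)
    (θ₁ θ₂ : D →ₗ[F] D)
    (hθ₁L : ∀ x : A, θ₁ (L x) = χ₁ x • L x + ((b₁ * d x + a₁) * χ₁ x) • I x)
    (hθ₁I : ∀ y : A, θ₁ (I y) = (c₁ * χ₁ y) • I y)
    (hθ₂L : ∀ x : A, θ₂ (L x) = χ₂ x • L x + ((b₂ * d x + a₂) * χ₂ x) • I x)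
    (hθ₂I : ∀ y : A, θ₂ (I y) = (c₂ * χ₂ y) • I y) :
    (∀ x : A, (θ₁ ∘ₗ θ₂) (L x) =
      (χ₁ x * χ₂ x) • L x + (((b₁ + c₁ * b₂) * d x + (a₁ + c₁ * a₂)) * (χ₁ x * χ₂ x)) • I x) ∧
    (∀ y : A, (θ₁ ∘ₗ θ₂) (I y) = ((c₁ * c₂) * (χ₁ y * χ₂ y)) • I y) := by
  constructor
  · intro x
    simp only [LinearMap.comp_apply, hθ₂L, map_add, map_smul, hθ₁L, hθ₁I, smul_smul,
      smul_add]
    rw [add_assoc, ← add_smul]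
    ring_nf
  · intro y
    simp only [LinearMap.comp_apply, hθ₂I, map_smul, hθ₁I, smul_smul]
    ring_nf
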